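/- Let F = ℂ(x, z) be the field of rational functions in two variables over ℂ, let A ⊆ F be the ℂ-subalgebra generated by x, z, z⁻¹ and x/(z − z⁻¹), and let σ be the ℂ-algebra automorphism of F determined by σ(x) = −x, σ(z) = z⁻¹ (which preserves A). Let φ : ℂ[a, t] → F be the ℂ-algebra homomorphism with φ(a) = z + z⁻¹ and φ(t) = x/(z − z⁻¹). Then φ is injective and its image equals the fixed subalgebra A^σ = {f ∈ A : σ(f) = f}. -/
import Mathlib


open MvPolynomial

noncomputable def epsH : MvPolynomial (Fin 2) ℂ →ₐ[ℂ] Polynomial (Polynomial ℂ) :=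
  aeval ![Polynomial.C Polynomial.X, Polynomial.X]

lemma epsH_leftinv (P : MvPolynomial (Fin 2) ℂ) :
    Polynomial.eval₂ (Polynomial.eval₂RingHom MvPolynomial.C (MvPolynomial.X 0))
      (MvPolynomial.X 1) (epsH P) = P := by
  have h : (Polynomial.eval₂RingHom
        (Polynomial.eval₂RingHom MvPolynomial.C (MvPolynomial.X 0)) (MvPolynomial.X 1)).comp
      (epsH.toRingHom) = RingHom.id _ := by
    apply MvPolynomial.ringHom_ext
    · intro c
      simp [epsH]
    · intro i
      fin_cases i <;> simp [epsH]
  exact RingHom.congr_fun h P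

lemma epsH_inj : Function.Injective epsH :=
  Function.LeftInverse.injective epsH_leftinv

noncomputable def nuH : Polynomial (Polynomial ℂ) →+* MvPolynomial (Fin 2) ℂ :=
  Polynomial.eval₂RingHom (Polynomial.eval₂RingHom MvPolynomial.C (MvPolynomial.X 1))
    (MvPolynomial.X 0)

lemma nuH_leftinv (q : Polynomial (Polynomial ℂ)) :
    (aeval ![(Polynomial.X : Polynomial (Polynomial ℂ)), Polynomial.C Polynomial.X]) (nuH q)
      = q := by
  have h : ((aeval ![(Polynomial.X : Polynomial (Polynomial ℂ)),
      Polynomial.C Polynomial.X]).toRingHom).comp nuH = RingHom.id _ := by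
    apply Polynomial.ringHom_ext
    · intro p
      show (aeval ![(Polynomial.X : Polynomial (Polynomial ℂ)),
          Polynomial.C Polynomial.X]).toRingHom (nuH (Polynomial.C p)) = Polynomial.C p
      have h1 : nuH (Polynomial.C p)
          = Polynomial.eval₂ MvPolynomial.C (MvPolynomial.X 1) p := by
        simp [nuH]
      rw [h1, Polynomial.hom_eval₂]
      have h2 : ((aeval ![(Polynomial.X : Polynomial (Polynomial ℂ)),
          Polynomial.C Polynomial.X] : MvPolynomial (Fin 2) ℂ →ₐ[ℂ] _).toRingHom).comp
          (MvPolynomial.C : ℂ →+* _)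
          = (Polynomial.C : Polynomial ℂ →+* _).comp (Polynomial.C : ℂ →+* _) := by
        apply RingHom.ext; intro c; simp
      have h3 : (aeval ![(Polynomial.X : Polynomial (Polynomial ℂ)),
          Polynomial.C Polynomial.X] : MvPolynomial (Fin 2) ℂ →ₐ[ℂ] _).toRingHom
          (MvPolynomial.X 1) = Polynomial.C Polynomial.X := by
        simp
      rw [h2, h3,
        show Polynomial.eval₂ ((Polynomial.C : Polynomial ℂ →+* _).comp
            (Polynomial.C : ℂ →+* _)) (Polynomial.C Polynomial.X) p
          = Polynomial.C (Polynomial.eval₂ Polynomial.C Polynomial.X p) from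
          (Polynomial.hom_eval₂ p Polynomial.C Polynomial.C Polynomial.X).symm,
        Polynomial.eval₂_C_X]
    · simp [nuH]
  exact RingHom.congr_fun h q

lemma nuH_inj : Function.Injective nuH :=
  Function.LeftInverse.injective nuH_leftinv


lemma monic_aux (N i : ℕ) (hi : i ≤ N) :
    ((Polynomial.X ^ 2 + 1 : Polynomial ℂ) ^ i * Polynomial.X ^ (N - i)).Monic ∧
    ((Polynomial.X ^ 2 + 1 : Polynomial ℂ) ^ i * Polynomial.X ^ (N - i)).natDegree = N + i := by
  have h1 : (Polynomial.X ^ 2 + 1 : Polynomial ℂ).Monic := by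
    simpa using Polynomial.monic_X_pow_add_C (1 : ℂ) (two_ne_zero)
  have h2 : (Polynomial.X ^ 2 + 1 : Polynomial ℂ).natDegree = 2 := by
    simpa using Polynomial.natDegree_X_pow_add_C (n := 2) (r := (1 : ℂ))
  refine ⟨(h1.pow i).mul (Polynomial.monic_X_pow _), ?_⟩
  rw [((h1.pow i)).natDegree_mul (Polynomial.monic_X_pow _), h1.natDegree_pow, h2, Polynomial.natDegree_X_pow]
  omega

lemma trf_ne_zero (N : ℕ) (p : Polynomial ℂ) (hp : p ≠ 0) (hN : p.natDegree ≤ N) :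
    (∑ i ∈ p.support, Polynomial.C (p.coeff i) * (Polynomial.X ^ 2 + 1) ^ i * Polynomial.X ^ (N - i))
      ≠ 0 := by
  intro h
  have hd := congrArg (fun q => Polynomial.coeff q (N + p.natDegree)) h
  simp only [Polynomial.finset_sum_coeff, Polynomial.coeff_zero] at hd
  rw [Finset.sum_eq_single p.natDegree] at hd
  · have hm := monic_aux N p.natDegree hN
    rw [mul_assoc, Polynomial.coeff_C_mul, ← hm.2, hm.1.coeff_natDegree, mul_one] at hd
    exact (Polynomial.leadingCoeff_ne_zero.mpr hp) hd
  · intro i hi hne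
    have hile : i ≤ p.natDegree := Polynomial.le_natDegree_of_mem_supp i hi
    have hiN : i ≤ N := le_trans hile hN
    have hm := monic_aux N i hiN
    rw [mul_assoc, Polynomial.coeff_C_mul]
    apply mul_eq_zero_of_right
    apply Polynomial.coeff_eq_zero_of_natDegree_lt
    rw [hm.2]
    omega
  · intro hns
    exact absurd (Polynomial.natDegree_mem_support_of_nonzero hp) hns

lemma key_inj (F : Type) [Field F] [Algebra ℂ F] [Algebra (MvPolynomial (Fin 2) ℂ) F]
    [IsScalarTower ℂ (MvPolynomial (Fin 2) ℂ) F]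
    [IsFractionRing (MvPolynomial (Fin 2) ℂ) F]
    (x z : F)
    (hx : x = algebraMap (MvPolynomial (Fin 2) ℂ) F (X 0))
    (hz : z = algebraMap (MvPolynomial (Fin 2) ℂ) F (X 1)) :
    Function.Injective (aeval ![z + z⁻¹, x / (z - z⁻¹)] :
      MvPolynomial (Fin 2) ℂ →ₐ[ℂ] F) := by
  have hι : Function.Injective (algebraMap (MvPolynomial (Fin 2) ℂ) F) :=
    IsFractionRing.injective _ _
  set ι := algebraMap (MvPolynomial (Fin 2) ℂ) F with hιdef
  have halg : ∀ c : ℂ, algebraMap ℂ F c = ι (MvPolynomial.C c) := fun c => by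
    rw [IsScalarTower.algebraMap_apply ℂ (MvPolynomial (Fin 2) ℂ) F, MvPolynomial.algebraMap_eq]
  have hz0 : z ≠ 0 := by
    rw [hz]
    intro h
    exact MvPolynomial.X_ne_zero 1 (hι (h.trans (map_zero ι).symm))
  have hz2 : z ^ 2 - 1 ≠ 0 := by
    have he : z ^ 2 - 1 = ι (MvPolynomial.X 1 ^ 2 - 1) := by rw [map_sub, map_pow, map_one, hz]
    rw [he]
    intro h
    have h2 := hι (h.trans (map_zero ι).symm)
    have h3 := congrArg MvPolynomial.constantCoeff h2
    simp at h3
  have hzz : z - z⁻¹ ≠ 0 := by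
    intro h
    apply hz2
    have e : (z - z⁻¹) * z = z ^ 2 - 1 := by
      rw [sub_mul, inv_mul_cancel₀ hz0]; ring
    rw [← e, h, zero_mul]
  set a := z + z⁻¹ with hadef
  set t := x / (z - z⁻¹) with htdef
  have ha' : a * z = z ^ 2 + 1 := by
    rw [hadef, add_mul, inv_mul_cancel₀ hz0]; ring
  have ht' : t * (z ^ 2 - 1) = x * z := by
    have e : (z - z⁻¹) * z = z ^ 2 - 1 := by
      rw [sub_mul, inv_mul_cancel₀ hz0]; ring
    rw [htdef, ← e]
    calc x / (z - z⁻¹) * ((z - z⁻¹) * z) = x / (z - z⁻¹) * (z - z⁻¹) * z := by ring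
      _ = x * z := by rw [div_mul_cancel₀ _ hzz]
  rw [injective_iff_map_eq_zero]
  intro P hP
  by_contra hP0
  have hfne : epsH P ≠ 0 := fun hh =>
    hP0 (epsH_inj (hh.trans (map_zero epsH).symm))
  set f := epsH P with hf
  set N := f.natDegree + f.support.sup (fun k => (f.coeff k).natDegree) with hN
  have hdN : f.natDegree ≤ N := Nat.le_add_right _ _
  have hkN : ∀ k ∈ f.support, k ≤ N := fun k hk =>
    le_trans (Polynomial.le_natDegree_of_mem_supp k hk) hdN
  have hcN : ∀ k, (f.coeff k).natDegree ≤ N := by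
    intro k
    by_cases hmem : k ∈ f.support
    · exact le_trans (Finset.le_sup (f := fun k => (f.coeff k).natDegree) hmem)
        (Nat.le_add_left _ _)
    · rw [Polynomial.notMem_support_iff.mp hmem]; simp
  set evz : Polynomial ℂ →+* F := Polynomial.eval₂RingHom (algebraMap ℂ F) z with hevz
  set evA : Polynomial ℂ →+* F := Polynomial.eval₂RingHom (algebraMap ℂ F) a with hevA
  have hevzX : evz Polynomial.X = z := by simp [hevz]
  have hev_inNu : ∀ p : Polynomial ℂ,
      ι (Polynomial.eval₂ MvPolynomial.C (MvPolynomial.X 1) p) = evz p := by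
    intro p
    rw [Polynomial.hom_eval₂]
    rw [hevz, Polynomial.coe_eval₂RingHom]
    congr 1
    · exact RingHom.ext fun c => (halg c).symm
    · exact hz.symm
  have hTr_eval : ∀ p : Polynomial ℂ, p.natDegree ≤ N →
      evz (∑ i ∈ p.support, Polynomial.C (p.coeff i) * (Polynomial.X ^ 2 + 1) ^ i
        * Polynomial.X ^ (N - i)) = evA p * z ^ N := by
    intro p hp
    rw [map_sum]
    have hA_exp : evA p = ∑ i ∈ p.support, algebraMap ℂ F (p.coeff i) * a ^ i := by
      rw [hevA, Polynomial.coe_eval₂RingHom, Polynomial.eval₂_eq_sum, Polynomial.sum_def]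
    rw [hA_exp, Finset.sum_mul]
    apply Finset.sum_congr rfl
    intro i hi
    have hiN : i ≤ N := le_trans (Polynomial.le_natDegree_of_mem_supp i hi) hp
    have h1 : (z ^ 2 + 1) ^ i * z ^ (N - i) = a ^ i * z ^ N := by
      rw [← ha', mul_pow, mul_assoc, ← pow_add, Nat.add_sub_cancel' hiN]
    have hevzC : ∀ c : ℂ, evz (Polynomial.C c) = algebraMap ℂ F c := by
      intro c; rw [hevz, Polynomial.coe_eval₂RingHom, Polynomial.eval₂_C]
    have h0 : evz (Polynomial.C (p.coeff i) * (Polynomial.X ^ 2 + 1) ^ i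
        * Polynomial.X ^ (N - i))
        = algebraMap ℂ F (p.coeff i) * (z ^ 2 + 1) ^ i * z ^ (N - i) := by
      simp only [map_mul, map_pow, map_add, map_one, hevzX, hevzC]
    rw [h0, mul_assoc, h1, ← mul_assoc]
  set g : Polynomial (Polynomial ℂ) := ∑ k ∈ f.support,
    Polynomial.C ((∑ i ∈ (f.coeff k).support, Polynomial.C ((f.coeff k).coeff i)
      * (Polynomial.X ^ 2 + 1) ^ i * Polynomial.X ^ (N - i))
      * Polynomial.X ^ k * (Polynomial.X ^ 2 - 1) ^ (N - k)) * Polynomial.X ^ k with hg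
  have hnuC : ∀ q : Polynomial ℂ, nuH (Polynomial.C q)
      = Polynomial.eval₂ MvPolynomial.C (MvPolynomial.X 1) q := by
    intro q; simp [nuH]
  have hnuX : nuH Polynomial.X = MvPolynomial.X 0 := by simp [nuH]
  have hphi : (aeval ![a, t] : MvPolynomial (Fin 2) ℂ →ₐ[ℂ] F) P
      = ∑ k ∈ f.support, evA (f.coeff k) * t ^ k := by
    have hc : (Polynomial.eval₂RingHom evA t).comp (epsH.toRingHom)
        = (aeval ![a, t] : MvPolynomial (Fin 2) ℂ →ₐ[ℂ] F).toRingHom := by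
      apply MvPolynomial.ringHom_ext
      · intro c
        simp [epsH, hevA]
      · intro i
        fin_cases i <;> simp [epsH, hevA]
    have h4 := RingHom.congr_fun hc P
    simp only [RingHom.coe_comp, Function.comp_apply] at h4
    rw [show ((aeval ![a, t] : MvPolynomial (Fin 2) ℂ →ₐ[ℂ] F) P)
        = (aeval ![a, t] : MvPolynomial (Fin 2) ℂ →ₐ[ℂ] F).toRingHom P from rfl, ← h4]
    show Polynomial.eval₂ evA t f = _
    rw [Polynomial.eval₂_eq_sum, Polynomial.sum_def]
  have hkey : ι (nuH g) = 0 := by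
    have hmain : ι (nuH g)
        = ((aeval ![a, t] : MvPolynomial (Fin 2) ℂ →ₐ[ℂ] F) P)
          * (z ^ N * (z ^ 2 - 1) ^ N) := by
      rw [hphi, Finset.sum_mul, hg, map_sum, map_sum]
      apply Finset.sum_congr rfl
      intro k hk
      have hkN' := hkN k hk
      have hxz : x ^ k * z ^ k = t ^ k * (z ^ 2 - 1) ^ k := by
        rw [← mul_pow, ← mul_pow, ht']
      have h2 : x ^ k * z ^ k * (z ^ 2 - 1) ^ (N - k) = t ^ k * (z ^ 2 - 1) ^ N := by
        rw [hxz, mul_assoc, ← pow_add, Nat.add_sub_cancel' hkN']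
      rw [map_mul, map_pow, hnuC, hnuX, map_mul, map_pow, hev_inNu, ← hx]
      have hq : evz ((∑ i ∈ (f.coeff k).support, Polynomial.C ((f.coeff k).coeff i)
          * (Polynomial.X ^ 2 + 1) ^ i * Polynomial.X ^ (N - i))
          * Polynomial.X ^ k * (Polynomial.X ^ 2 - 1) ^ (N - k))
          = (evA (f.coeff k) * z ^ N) * z ^ k * (z ^ 2 - 1) ^ (N - k) := by
        rw [map_mul, map_mul, map_pow, map_pow, map_sub, map_one, map_pow, hevzX,
          hTr_eval _ (hcN k)]
      rw [hq]
      linear_combination evA (f.coeff k) * z ^ N * h2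
    rw [hmain, hP, zero_mul]
  have hg0 : g = 0 := by
    apply nuH_inj
    apply hι
    rw [map_zero, map_zero]
    exact hkey
  have hc2 : Polynomial.coeff g f.natDegree
      = (∑ i ∈ (f.coeff f.natDegree).support,
          Polynomial.C ((f.coeff f.natDegree).coeff i)
          * (Polynomial.X ^ 2 + 1) ^ i * Polynomial.X ^ (N - i))
        * Polynomial.X ^ f.natDegree * (Polynomial.X ^ 2 - 1) ^ (N - f.natDegree) := by
    rw [hg, Polynomial.finset_sum_coeff]
    rw [Finset.sum_eq_single f.natDegree]
    · rw [Polynomial.coeff_C_mul, Polynomial.coeff_X_pow, if_pos rfl, mul_one]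
    · intro k hk hne
      rw [Polynomial.coeff_C_mul, Polynomial.coeff_X_pow, if_neg (Ne.symm hne), mul_zero]
    · intro h; exact absurd (Polynomial.natDegree_mem_support_of_nonzero hfne) h
  rw [hg0, Polynomial.coeff_zero] at hc2
  have hXne : (Polynomial.X ^ 2 - 1 : Polynomial ℂ) ≠ 0 := by
    intro h
    have h5 := congrArg (fun q => Polynomial.coeff q 2) h
    simp [Polynomial.coeff_X_pow, Polynomial.coeff_one] at h5
  have hpstar : f.coeff f.natDegree ≠ 0 := by
    rw [← Polynomial.leadingCoeff]
    exact Polynomial.leadingCoeff_ne_zero.mpr hfne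
  exact (mul_ne_zero (mul_ne_zero (trf_ne_zero N _ hpstar (hcN _))
    (pow_ne_zero _ Polynomial.X_ne_zero)) (pow_ne_zero _ hXne)) hc2.symm


/-- Let `F = ℂ(x, z)` be the field of rational functions in two
variables over `ℂ` (an abstract fraction field of `ℂ[x, z]`), let `A ⊆ F` be
the `ℂ`-subalgebra generated by `x, z, z⁻¹, x/(z − z⁻¹)`, and let `σ` be the
`ℂ`-algebra automorphism of `F` with `σ(x) = −x`, `σ(z) = z⁻¹`. Let
`φ : ℂ[a, t] → F` be the `ℂ`-algebra homomorphism sending `a ↦ z + z⁻¹` and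
`t ↦ x/(z − z⁻¹)`. Then `φ` is injective and `im φ = A^σ`. -/
theorem coordinate_ring_ZGg_SL2
    (F : Type) [Field F] [Algebra ℂ F] [Algebra (MvPolynomial (Fin 2) ℂ) F]
    [IsScalarTower ℂ (MvPolynomial (Fin 2) ℂ) F]
    [IsFractionRing (MvPolynomial (Fin 2) ℂ) F]
    (x z : F)
    (hx : x = algebraMap (MvPolynomial (Fin 2) ℂ) F (X 0))
    (hz : z = algebraMap (MvPolynomial (Fin 2) ℂ) F (X 1))
    (A : Subalgebra ℂ F)
    (hA : A = Algebra.adjoin ℂ ({x, z, z⁻¹, x / (z - z⁻¹)} : Set F))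
    (σ : F ≃ₐ[ℂ] F) (hσx : σ x = -x) (hσz : σ z = z⁻¹)
    (φ : MvPolynomial (Fin 2) ℂ →ₐ[ℂ] F)
    (hφ : φ = aeval ![z + z⁻¹, x / (z - z⁻¹)]) :
    Function.Injective φ ∧
    (φ.range : Set F) = {f : F | f ∈ A ∧ σ f = f} := by
  have hι : Function.Injective (algebraMap (MvPolynomial (Fin 2) ℂ) F) :=
    IsFractionRing.injective _ _
  have hz0 : z ≠ 0 := by
    rw [hz]
    intro h
    exact MvPolynomial.X_ne_zero 1 (hι (h.trans (map_zero _).symm))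
  have hz2 : z ^ 2 - 1 ≠ 0 := by
    have he : z ^ 2 - 1 = algebraMap (MvPolynomial (Fin 2) ℂ) F (MvPolynomial.X 1 ^ 2 - 1) := by
      rw [map_sub, map_pow, map_one, hz]
    rw [he]
    intro h
    have h2 := hι (h.trans (map_zero _).symm)
    have h3 := congrArg MvPolynomial.constantCoeff h2
    simp at h3
  have hzz : z - z⁻¹ ≠ 0 := by
    intro h
    apply hz2
    have e : (z - z⁻¹) * z = z ^ 2 - 1 := by
      rw [sub_mul, inv_mul_cancel₀ hz0]; ring
    rw [← e, h, zero_mul]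
  set a := z + z⁻¹ with hadef
  set t := x / (z - z⁻¹) with htdef
  have hσt : σ t = t := by
    rw [htdef, map_div₀, hσx, map_sub, hσz, map_inv₀, hσz, inv_inv]
    rw [show z⁻¹ - z = -(z - z⁻¹) from by ring, div_neg, neg_div, neg_neg]
  have hσa : σ a = a := by
    rw [hadef, map_add, hσz, map_inv₀, hσz, inv_inv, add_comm]
  have hamem : a ∈ A := by
    rw [hA, hadef]
    exact add_mem (Algebra.subset_adjoin (by simp)) (Algebra.subset_adjoin (by simp))
  have htmem : t ∈ A := by
    rw [hA]
    exact Algebra.subset_adjoin (by simp)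
  have hrange : φ.range = Algebra.adjoin ℂ ({a, t} : Set F) := by
    rw [hφ, ← Algebra.adjoin_range_eq_range_aeval]
    congr 1
    ext u
    simp only [Set.mem_range, Set.mem_insert_iff, Set.mem_singleton_iff]
    constructor
    · rintro ⟨i, rfl⟩
      fin_cases i
      · left; simp
      · right; simp
    · rintro (rfl | rfl)
      exacts [⟨0, by simp⟩, ⟨1, by simp⟩]
  refine ⟨?_, ?_⟩
  · rw [hφ]
    exact key_inj F x z hx hz
  · ext u
    simp only [SetLike.mem_coe, Set.mem_setOf_eq]
    constructor
    · intro hu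
      rw [hrange] at hu
      constructor
      · refine Algebra.adjoin_le ?_ hu
        rintro w hw
        rcases hw with rfl | hw
        · exact hamem
        · rw [Set.mem_singleton_iff] at hw; subst hw; exact htmem
      · refine Algebra.adjoin_induction (fun w hw => ?_) (fun r => σ.commutes r)
          (fun p q hp hq ihp ihq => ?_) (fun p q hp hq ihp ihq => ?_) hu
        · rcases hw with rfl | hw
          · exact hσa
          · rw [Set.mem_singleton_iff] at hw; subst hw; exact hσt
        · rw [map_add, ihp, ihq]
        · rw [map_mul, ihp, ihq]
    · rintro ⟨huA, huσ⟩
      have hA' : A = Algebra.adjoin ℂ ({z, z⁻¹, t} : Set F) := by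
        apply le_antisymm
        · have hxadj : x ∈ Algebra.adjoin ℂ ({z, z⁻¹, t} : Set F) := by
            have hxe : t * (z - z⁻¹) = x := div_mul_cancel₀ x hzz
            have hxe2 : x = t * z - t * z⁻¹ := by rw [← hxe]; ring
            rw [hxe2]
            exact sub_mem
              (mul_mem (Algebra.subset_adjoin (by simp)) (Algebra.subset_adjoin (by simp)))
              (mul_mem (Algebra.subset_adjoin (by simp)) (Algebra.subset_adjoin (by simp)))
          rw [hA]
          apply Algebra.adjoin_le
          intro w hw
          simp only [Set.mem_insert_iff, Set.mem_singleton_iff] at hw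
          rcases hw with rfl | rfl | rfl | rfl
          · exact hxadj
          · exact Algebra.subset_adjoin (by simp)
          · exact Algebra.subset_adjoin (by simp)
          · exact Algebra.subset_adjoin (by simp)
        · apply Algebra.adjoin_le
          intro w hw
          simp only [Set.mem_insert_iff, Set.mem_singleton_iff] at hw
          rw [hA]
          rcases hw with rfl | rfl | rfl
          · exact Algebra.subset_adjoin (by simp)
          · exact Algebra.subset_adjoin (by simp)
          · exact Algebra.subset_adjoin (by simp)
      have hspan : u ∈ Submodule.span ℂ
          ((Submonoid.closure ({z, z⁻¹, t} : Set F) : Submonoid F) : Set F) := by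
        have h1 : u ∈ Subalgebra.toSubmodule (Algebra.adjoin ℂ ({z, z⁻¹, t} : Set F)) := by
          rw [Subalgebra.mem_toSubmodule, ← hA']
          exact huA
        rwa [Algebra.adjoin_eq_span] at h1
      set T : F →ₗ[ℂ] F := (2⁻¹ : ℂ) • (LinearMap.id + σ.toLinearMap) with hT
      have hTapp : ∀ w : F, T w = (2⁻¹ : ℂ) • (w + σ w) := by
        intro w
        simp [hT]
      have hTu : T u = u := by
        rw [hTapp, huσ, ← two_smul ℂ u, smul_smul]
        norm_num
      have hstep : ∀ (k : ℤ) (n m : ℕ), z ^ k + z ^ (-k) = z ^ n + (z⁻¹) ^ n →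
          T (z ^ k * t ^ m) ∈ Algebra.adjoin ℂ ({a, t} : Set F) := by
        intro k n m hsum
        have hσw : σ (z ^ k * t ^ m) = z ^ (-k) * t ^ m := by
          rw [map_mul, map_zpow₀, hσz, map_pow, hσt, inv_zpow, ← zpow_neg]
        have hdick : (Polynomial.aeval a) (Polynomial.dickson 1 (1 : ℂ) n)
            = z ^ n + (z⁻¹) ^ n := by
          rw [Polynomial.aeval_def, Polynomial.eval₂_eq_eval_map, Polynomial.map_dickson,
            map_one, Polynomial.dickson_one_one_eval_add_inv z z⁻¹ (mul_inv_cancel₀ hz0)]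
        have hTw : T (z ^ k * t ^ m) = (2⁻¹ : ℂ) •
            ((Polynomial.aeval a) (Polynomial.dickson 1 (1 : ℂ) n) * t ^ m) := by
          rw [hTapp, hσw]
          congr 1
          rw [hdick, ← hsum]
          ring
        rw [hTw]
        apply Subalgebra.smul_mem
        apply mul_mem
        · exact Algebra.adjoin_mono (by simp)
            (Polynomial.aeval_mem_adjoin_singleton ℂ a)
        · exact pow_mem (Algebra.subset_adjoin (by simp)) m
      have hTmem : ∀ w ∈ (Submonoid.closure ({z, z⁻¹, t} : Set F) : Submonoid F),
          T w ∈ Algebra.adjoin ℂ ({a, t} : Set F) := by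
        intro w hw
        have hmono : ∃ (k : ℤ) (m : ℕ), w = z ^ k * t ^ m := by
          refine Submonoid.closure_induction (fun v hv => ?_) ?_
            (fun v v' hv hv' ihv ihv' => ?_) hw
          · simp only [Set.mem_insert_iff, Set.mem_singleton_iff] at hv
            rcases hv with rfl | rfl | rfl
            · exact ⟨1, 0, by simp⟩
            · exact ⟨-1, 0, by simp⟩
            · exact ⟨0, 1, by simp⟩
          · exact ⟨0, 0, by simp⟩
          · obtain ⟨k, m, rfl⟩ := ihv
            obtain ⟨k', m', rfl⟩ := ihv'
            exact ⟨k + k', m + m', by rw [zpow_add₀ hz0, pow_add]; ring⟩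
        obtain ⟨k, m, rfl⟩ := hmono
        obtain ⟨n, hk | hk⟩ : ∃ n : ℕ, k = (n : ℤ) ∨ k = -(n : ℤ) :=
          ⟨k.natAbs, Int.natAbs_eq k⟩
        · subst hk
          exact hstep _ n m (by rw [zpow_neg, zpow_natCast, ← inv_pow])
        · subst hk
          exact hstep _ n m
            (by rw [neg_neg, zpow_neg, zpow_natCast, ← inv_pow, add_comm])
      rw [hrange]
      have h5 : T u ∈ Submodule.map T (Submodule.span ℂ
          ((Submonoid.closure ({z, z⁻¹, t} : Set F) : Submonoid F) : Set F)) :=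
        Submodule.mem_map_of_mem hspan
      rw [Submodule.map_span] at h5
      have h6 : Submodule.span ℂ
          (T '' ((Submonoid.closure ({z, z⁻¹, t} : Set F) : Submonoid F) : Set F))
          ≤ Subalgebra.toSubmodule (Algebra.adjoin ℂ ({a, t} : Set F)) :=
        Submodule.span_le.mpr (by rintro _ ⟨w, hw, rfl⟩; exact hTmem w hw)
      have h8 := h6 h5
      rw [hTu] at h8
      exact h8
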